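/- Let 0 < ε < 1 and set N(ε) := ⌈log(ε)/log(1−ε)⌉. If (α_i)_{i∈ℕ} is a complex-valued sequence converging to 0, then lim_{ε→0⁺} Σ_{i=1}^{N(ε)} ε(1−ε)^{N(ε)−i} · α_i = 0. -/

import Mathlib

open Filter

/-- `N(ε) = ⌈log(ε)/log(1-ε)⌉`. -/
noncomputable def Nfun (ε : ℝ) : ℕ := (⌈Real.log ε / Real.log (1 - ε)⌉).toNat

lemma aux_pow_le {ε : ℝ} (h0 : 0 < ε) (h1 : ε < 1) : (1 - ε) ^ Nfun ε ≤ ε := by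
  have h1e : 0 < 1 - ε := by linarith
  have hlog : Real.log (1 - ε) < 0 := Real.log_neg h1e (by linarith)
  set N : ℕ := Nfun ε with hN
  have hle : Real.log ε / Real.log (1 - ε) ≤ (N : ℝ) := by
    calc Real.log ε / Real.log (1 - ε) ≤ (⌈Real.log ε / Real.log (1 - ε)⌉ : ℝ) := Int.le_ceil _
    _ ≤ ((N : ℤ) : ℝ) := by exact_mod_cast Int.self_le_toNat _
    _ = (N : ℝ) := by push_cast; ring
  have h2 : (N : ℝ) * Real.log (1 - ε) ≤ Real.log ε := by
    have := (div_le_iff_of_neg hlog).mp hle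
    linarith
  have h3 : Real.log ((1 - ε) ^ N) ≤ Real.log ε := by
    rw [Real.log_pow]; linarith
  exact (Real.log_le_log_iff (pow_pos h1e N) h0).mp h3

lemma aux_geom {ε : ℝ} (h0 : 0 < ε) (h1 : ε < 1) (N : ℕ) :
    ∑ i ∈ Finset.Icc 1 N, ε * (1 - ε) ^ (N - i) ≤ 1 := by
  have h1e : 0 < 1 - ε := by linarith
  have key : ∑ i ∈ Finset.Icc 1 N, ε * (1 - ε) ^ (N - i)
      = ∑ j ∈ Finset.range N, ε * (1 - ε) ^ j := by
    rw [show Finset.Icc 1 N = Finset.Ico 1 (N+1) by rw [Finset.Ico_add_one_right_eq_Icc],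
      Finset.sum_Ico_eq_sum_range]
    simp only [Nat.add_sub_cancel]
    rw [← Finset.sum_range_reflect (fun j => ε * (1 - ε) ^ j) N]
    apply Finset.sum_congr rfl
    intro j hj
    have h2 : N - (1 + j) = N - 1 - j := by omega
    rw [h2]
  rw [key, ← Finset.mul_sum, geom_sum_eq (by intro h; nlinarith [h] : (1 - ε) ≠ 1)]
  have hpow : 0 ≤ (1 - ε) ^ N := le_of_lt (pow_pos h1e N)
  have heq : ε * (((1 - ε) ^ N - 1) / (1 - ε - 1)) = 1 - (1 - ε) ^ N := by
    rw [mul_div_assoc', div_eq_iff (by linarith : (1:ℝ) - ε - 1 ≠ 0)]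
    ring
  rw [heq]; linarith

lemma aux_M_le {M : ℕ} {ε : ℝ} (h0 : 0 < ε) (h2 : ε < 1/2)
    (hε : ε < Real.exp (-(M : ℝ))) : M ≤ Nfun ε := by
  have hlogneg : Real.log (1 - ε) < 0 := Real.log_neg (by linarith) (by linarith)
  have hexphalf : Real.exp (-1) < 1/2 := by
    rw [Real.exp_neg]
    have hp : 0 < Real.exp 1 := Real.exp_pos 1
    have hgt : (2 : ℝ) < Real.exp 1 := by
      have := Real.exp_one_gt_d9; linarith
    have hip : 0 < (Real.exp 1)⁻¹ := by positivity
    nlinarith [mul_inv_cancel₀ (ne_of_gt hp)]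
  have hlog1 : -1 < Real.log (1 - ε) := by
    have hlt : Real.exp (-1) < 1 - ε := by linarith
    calc (-1 : ℝ) = Real.log (Real.exp (-1)) := (Real.log_exp _).symm
    _ < Real.log (1 - ε) := Real.log_lt_log (Real.exp_pos _) hlt
  have hlε : Real.log ε < -(M : ℝ) := by
    have := Real.log_lt_log h0 hε
    rwa [Real.log_exp] at this
  have hkey : Real.log ε ≤ (M : ℝ) * Real.log (1 - ε) := by
    nlinarith [Nat.cast_nonneg (α := ℝ) M]
  have hdiv : (M : ℝ) ≤ Real.log ε / Real.log (1 - ε) := by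
    rw [le_div_iff_of_neg hlogneg]
    linarith
  have hceil : (M : ℤ) ≤ ⌈Real.log ε / Real.log (1 - ε)⌉ := by
    have := Int.le_ceil (Real.log ε / Real.log (1 - ε))
    exact_mod_cast hdiv.trans this
  unfold Nfun
  omega

/-- If `(α_i)` is a complex null sequence then
`Σ_{i=1}^{N(ε)} ε (1-ε)^{N(ε)-i} α_i → 0` as `ε → 0⁺` (with `0 < ε < 1`). -/
theorem stmt_4 (α : ℕ → ℂ) (hα : Tendsto α atTop (nhds 0)) :
    Tendsto
      (fun ε : ℝ => ∑ i ∈ Finset.Icc 1 (Nfun ε),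
        (ε : ℂ) * ((1 : ℂ) - (ε : ℂ)) ^ (Nfun ε - i) * α i)
      (nhdsWithin 0 (Set.Ioo (0 : ℝ) 1)) (nhds 0) := by
  rw [NormedAddCommGroup.tendsto_nhds_zero]
  intro δ hδ
  obtain ⟨C, hC⟩ : ∃ C : ℝ, ∀ i, ‖α i‖ ≤ C := by
    obtain ⟨C, hC⟩ := hα.norm.bddAbove_range
    exact ⟨C, fun i => hC ⟨i, rfl⟩⟩
  have hC0 : 0 ≤ C := le_trans (norm_nonneg (α 0)) (hC 0)
  obtain ⟨M, hM⟩ : ∃ M : ℕ, ∀ i ≥ M, ‖α i‖ ≤ δ/3 := by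
    obtain ⟨M, hM⟩ := Metric.tendsto_atTop.mp hα (δ/3) (by linarith)
    refine ⟨M, fun i hi => ?_⟩
    have := hM i hi
    rw [dist_zero_right] at this
    linarith
  set K : ℝ := (M : ℝ) * C * 2 ^ M + 1 with hK
  have hK0 : 0 < K := by positivity
  have hc0 : 0 < min (1/2 : ℝ) (min (Real.exp (-(M:ℝ))) (δ / (3 * K))) := by
    refine lt_min (by norm_num) (lt_min (Real.exp_pos _) (by positivity))
  have hsmall : ∀ᶠ ε in nhdsWithin 0 (Set.Ioo (0:ℝ) 1),
      ε < min (1/2 : ℝ) (min (Real.exp (-(M:ℝ))) (δ / (3 * K))) :=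
    (eventually_lt_nhds hc0).filter_mono nhdsWithin_le_nhds
  filter_upwards [eventually_mem_nhdsWithin, hsmall] with ε hεI hεlt
  obtain ⟨h0, h1⟩ := hεI
  have h12 : ε < 1/2 := lt_of_lt_of_le hεlt (min_le_left _ _)
  have hexp : ε < Real.exp (-(M:ℝ)) :=
    lt_of_lt_of_le hεlt ((min_le_right _ _).trans (min_le_left _ _))
  have hδK : ε < δ / (3 * K) :=
    lt_of_lt_of_le hεlt ((min_le_right _ _).trans (min_le_right _ _))
  have h1e : 0 < 1 - ε := by linarith
  set N : ℕ := Nfun ε with hN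
  have hMN : M ≤ N := aux_M_le h0 h12 hexp
  have hpowN : (1 - ε) ^ N ≤ ε := aux_pow_le h0 h1
  have hterm : ∀ i, ‖(ε : ℂ) * ((1 : ℂ) - (ε : ℂ)) ^ (N - i) * α i‖
      = ε * (1 - ε) ^ (N - i) * ‖α i‖ := by
    intro i
    have hcast : (1 : ℂ) - (ε : ℂ) = ((1 - ε : ℝ) : ℂ) := by push_cast; ring
    rw [norm_mul, norm_mul, norm_pow, hcast, Complex.norm_real, Complex.norm_real,
      Real.norm_eq_abs, Real.norm_eq_abs, abs_of_pos h0, abs_of_pos h1e]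
  -- (1-ε)^(N-M) ≤ ε * 2^M
  have hhead_pow : (1 - ε) ^ (N - M) ≤ ε * 2 ^ M := by
    have hsplit : (1 - ε) ^ (N - M) * (1 - ε) ^ M = (1 - ε) ^ N := by
      rw [← pow_add]; congr 1; omega
    have hhalf : ((1:ℝ)/2) ^ M ≤ (1 - ε) ^ M :=
      pow_le_pow_left₀ (by norm_num) (by linarith) M
    have h2M : ((1:ℝ)/2) ^ M * 2 ^ M = 1 := by
      rw [← mul_pow]; norm_num
    have hp1 : 0 < (1 - ε) ^ (N - M) := pow_pos h1e _
    have hp2 : (0:ℝ) < 2 ^ M := by positivity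
    have hstep : (1 - ε) ^ (N - M) * ((1:ℝ)/2) ^ M ≤ ε := by
      calc (1 - ε) ^ (N - M) * ((1:ℝ)/2) ^ M
          ≤ (1 - ε) ^ (N - M) * (1 - ε) ^ M := by
            exact mul_le_mul_of_nonneg_left hhalf (le_of_lt hp1)
      _ = (1 - ε) ^ N := hsplit
      _ ≤ ε := hpowN
    calc (1 - ε) ^ (N - M) = (1 - ε) ^ (N - M) * (((1:ℝ)/2) ^ M * 2 ^ M) := by
          rw [h2M, mul_one]
    _ = ((1 - ε) ^ (N - M) * ((1:ℝ)/2) ^ M) * 2 ^ M := by ring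
    _ ≤ ε * 2 ^ M := mul_le_mul_of_nonneg_right hstep (le_of_lt hp2)
  have hIcc : Finset.Icc 1 N = Finset.Ioc 0 N := by
    rw [← Finset.Icc_add_one_left_eq_Ioc, zero_add]
  calc ‖∑ i ∈ Finset.Icc 1 N, (ε : ℂ) * ((1 : ℂ) - (ε : ℂ)) ^ (N - i) * α i‖
      ≤ ∑ i ∈ Finset.Icc 1 N, ε * (1 - ε) ^ (N - i) * ‖α i‖ := by
        refine (norm_sum_le _ _).trans_eq (Finset.sum_congr rfl fun i _ => hterm i)
  _ = (∑ i ∈ Finset.Ioc 0 M, ε * (1 - ε) ^ (N - i) * ‖α i‖)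
      + ∑ i ∈ Finset.Ioc M N, ε * (1 - ε) ^ (N - i) * ‖α i‖ := by
        rw [hIcc, Finset.sum_Ioc_consecutive _ (Nat.zero_le M) hMN]
  _ ≤ δ/3 + δ/3 := by
      gcongr
      · -- head
        calc ∑ i ∈ Finset.Ioc 0 M, ε * (1 - ε) ^ (N - i) * ‖α i‖
            ≤ ∑ _i ∈ Finset.Ioc 0 M, ε * (ε * 2 ^ M) * C := by
              refine Finset.sum_le_sum fun i hi => ?_
              have hiM : i ≤ M := (Finset.mem_Ioc.mp hi).2
              have hpow : (1 - ε) ^ (N - i) ≤ (1 - ε) ^ (N - M) :=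
                pow_le_pow_of_le_one (le_of_lt h1e) (by linarith)
                  (Nat.sub_le_sub_left hiM N)
              have h1' : (1 - ε) ^ (N - i) ≤ ε * 2 ^ M := hpow.trans hhead_pow
              gcongr
              exact hC i
        _ = (M : ℝ) * (ε * (ε * 2 ^ M) * C) := by
              rw [Finset.sum_const, Nat.card_Ioc, Nat.sub_zero, nsmul_eq_mul]
        _ ≤ δ/3 := by
              have hεK : ε * K ≤ δ/3 := by
                rw [lt_div_iff₀ (by positivity : (0:ℝ) < 3 * K)] at hδK
                nlinarith
              have hKb : (M : ℝ) * C * 2 ^ M ≤ K := by rw [hK]; linarith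
              have hM0 : (0:ℝ) ≤ (M : ℝ) := Nat.cast_nonneg M
              have h2M0 : (0:ℝ) ≤ 2 ^ M := by positivity
              nlinarith
      · -- tail
        calc ∑ i ∈ Finset.Ioc M N, ε * (1 - ε) ^ (N - i) * ‖α i‖
            ≤ ∑ i ∈ Finset.Ioc M N, ε * (1 - ε) ^ (N - i) * (δ/3) := by
              refine Finset.sum_le_sum fun i hi => ?_
              have hiM : M ≤ i := le_of_lt (Finset.mem_Ioc.mp hi).1
              have := hM i hiM
              have hn1 : 0 ≤ ε * (1 - ε) ^ (N - i) := by positivity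
              nlinarith
        _ = (∑ i ∈ Finset.Ioc M N, ε * (1 - ε) ^ (N - i)) * (δ/3) := by
              rw [Finset.sum_mul]
        _ ≤ 1 * (δ/3) := by
              refine mul_le_mul_of_nonneg_right ?_ (by linarith)
              refine le_trans (Finset.sum_le_sum_of_subset_of_nonneg ?_ ?_)
                (aux_geom h0 h1 N)
              · intro i hi
                have := Finset.mem_Ioc.mp hi
                exact Finset.mem_Icc.mpr ⟨by omega, this.2⟩
              · intro i _ _
                positivity
        _ = δ/3 := one_mul _
  _ < δ := by linarith
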